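/- Gluing of morphisms along a complementary pair (the core of the proof that the Grothendieck topology τ_χ on bornological coarse spaces is subcanonical): Let (X,𝒞,ℬ) and (X',𝒞',ℬ') be bornological coarse spaces, let (Y_i)_{i∈I} be a big family on X, and let Z ⊆ X be a subset such that Z ∪ Y_{i₀} = X for some i₀ ∈ I (a complementary pair). Let h : X → X' be a map of sets such that for every entourage U ∈ 𝒞 the sets (h×h)(U ∩ (Z×Z)) and (h×h)(U ∩ (Y_i×Y_i)) for all i ∈ I belong to 𝒞', and for every bounded B' ∈ ℬ' the sets h⁻¹(B') ∩ Z and h⁻¹(B') ∩ Y_i for all i ∈ I belong to ℬ. Then h is a morphism of bornological coarse spaces: (h×h)(U) ∈ 𝒞' for every U ∈ 𝒞 and h⁻¹(B') ∈ ℬ for every B' ∈ ℬ'. -/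

import Mathlib

/-- The `U`-thickening `U[B] := {x : ∃ b ∈ B, (x, b) ∈ U}` of a subset `B` by an
entourage `U`. -/
def thick {X : Type*} (U : Set (X × X)) (B : Set X) : Set X :=
  {x | ∃ b ∈ B, (x, b) ∈ U}

/-- Composition of relations: `U ∘ V`. -/
def relComp {X : Type*} (U V : Set (X × X)) : Set (X × X) :=
  {p | ∃ z, (p.1, z) ∈ U ∧ (z, p.2) ∈ V}

/-- `iterComp U n` is the `(n+1)`-fold composition `U ∘ U ∘ ⋯ ∘ U`. -/
def iterComp {X : Type*} (U : Set (X × X)) : ℕ → Set (X × X)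
  | 0 => U
  | n + 1 => relComp (iterComp U n) U

/-- A bornological coarse structure on a set `X`: a coarse structure (a collection of
entourages containing the diagonal and closed under subsets, finite unions, inverses and
compositions) together with a compatible bornology (a collection of bounded sets covering
`X` and closed under subsets and finite unions, such that controlled thickenings of bounded
sets are bounded). -/
structure BornCoarse (X : Type*) where
  /-- the entourages -/
  entourages : Set (Set (X × X))
  diag_mem : {p : X × X | p.1 = p.2} ∈ entourages
  subset_mem : ∀ ⦃U V : Set (X × X)⦄, U ∈ entourages → V ⊆ U → V ∈ entourages
  union_mem : ∀ ⦃U V : Set (X × X)⦄, U ∈ entourages → V ∈ entourages → U ∪ V ∈ entourages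
  inv_mem : ∀ ⦃U : Set (X × X)⦄, U ∈ entourages → {p : X × X | (p.2, p.1) ∈ U} ∈ entourages
  comp_mem : ∀ ⦃U V : Set (X × X)⦄, U ∈ entourages → V ∈ entourages →
    relComp U V ∈ entourages
  /-- the bounded subsets -/
  bounded : Set (Set X)
  covers : ∀ x : X, ∃ B ∈ bounded, x ∈ B
  empty_mem : (∅ : Set X) ∈ bounded
  bounded_subset : ∀ ⦃B C : Set X⦄, B ∈ bounded → C ⊆ B → C ∈ bounded
  bounded_union : ∀ ⦃B C : Set X⦄, B ∈ bounded → C ∈ bounded → B ∪ C ∈ bounded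
  compat : ∀ ⦃U : Set (X × X)⦄ ⦃B : Set X⦄, U ∈ entourages → B ∈ bounded →
    thick U B ∈ bounded

/-- A map between bornological coarse spaces is controlled if it maps entourages to
entourages. -/
def IsControlled {X X' : Type*} (S : BornCoarse X) (S' : BornCoarse X') (f : X → X') :
    Prop :=
  ∀ U ∈ S.entourages, (fun p : X × X => (f p.1, f p.2)) '' U ∈ S'.entourages

/-- A map between bornological coarse spaces is proper if preimages of bounded sets are
bounded. -/
def IsProper {X X' : Type*} (S : BornCoarse X) (S' : BornCoarse X') (f : X → X') : Prop :=
  ∀ B ∈ S'.bounded, f ⁻¹' B ∈ S.bounded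

/-- A morphism of bornological coarse spaces is a controlled and proper map. -/
def IsMorphism {X X' : Type*} (S : BornCoarse X) (S' : BornCoarse X') (f : X → X') : Prop :=
  IsControlled S S' f ∧ IsProper S S' f

/-- Gluing of morphisms along a complementary pair: if `(Y i)` is a big family on `X`,
`Z ∪ Y i₀ = X`, and the set map `h : X → X'` is controlled and proper when restricted to
`Z` and to each member `Y i` (in the stated sense), then `h` is a morphism of bornological
coarse spaces. -/
theorem glue_morphism_along_complementary_pair {X X' : Type*}
    (S : BornCoarse X) (S' : BornCoarse X')
    {I : Type*} [PartialOrder I] [Nonempty I] [IsDirected I (· ≤ ·)]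
    (Y : I → Set X) (hmono : Monotone Y)
    (hbig : ∀ i : I, ∀ U ∈ S.entourages, ∃ j : I, thick U (Y i) ⊆ Y j)
    (Z : Set X) (i₀ : I) (hcompl : Z ∪ Y i₀ = Set.univ)
    (h : X → X')
    (hcZ : ∀ U ∈ S.entourages,
      (fun p : X × X => (h p.1, h p.2)) '' (U ∩ Z ×ˢ Z) ∈ S'.entourages)
    (hcY : ∀ U ∈ S.entourages, ∀ i : I,
      (fun p : X × X => (h p.1, h p.2)) '' (U ∩ Y i ×ˢ Y i) ∈ S'.entourages)
    (hpZ : ∀ B' ∈ S'.bounded, h ⁻¹' B' ∩ Z ∈ S.bounded)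
    (hpY : ∀ B' ∈ S'.bounded, ∀ i : I, h ⁻¹' B' ∩ Y i ∈ S.bounded) :
    IsMorphism S S' h := by
  have key : ∀ x : X, x ∈ Z ∨ x ∈ Y i₀ := fun x => by
    have hx : x ∈ Z ∪ Y i₀ := by rw [hcompl]; exact Set.mem_univ x
    exact hx
  constructor
  · intro U hU
    have hVmem : (U ∪ ({p : X × X | (p.2, p.1) ∈ U} ∪ {p : X × X | p.1 = p.2}))
        ∈ S.entourages :=
      S.union_mem hU (S.union_mem (S.inv_mem hU) S.diag_mem)
    obtain ⟨j, hj⟩ := hbig i₀ _ hVmem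
    have hY0j : Y i₀ ⊆ Y j := fun x hx => hj ⟨x, hx, Or.inr (Or.inr rfl)⟩
    have hsub : U ⊆ (U ∩ Z ×ˢ Z) ∪ (U ∩ Y j ×ˢ Y j) := by
      rintro ⟨x, y⟩ hxy
      rcases key x with hx | hx
      · rcases key y with hy | hy
        · exact Or.inl ⟨hxy, hx, hy⟩
        · exact Or.inr ⟨hxy, hj ⟨y, hy, Or.inl hxy⟩, hY0j hy⟩
      · exact Or.inr ⟨hxy, hY0j hx, hj ⟨x, hx, Or.inr (Or.inl hxy)⟩⟩
    have himg := S'.union_mem (hcZ U hU) (hcY U hU j)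
    rw [← Set.image_union] at himg
    exact S'.subset_mem himg (Set.image_mono hsub)
  · intro B' hB'
    have : h ⁻¹' B' = (h ⁻¹' B' ∩ Z) ∪ (h ⁻¹' B' ∩ Y i₀) := by
      rw [← Set.inter_union_distrib_left, hcompl, Set.inter_univ]
    rw [this]
    exact S.bounded_union (hpZ B' hB') (hpY B' hB' i₀)
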